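/- Let k be a commutative ring, A a commutative k-algebra, and (E,Ψ̄), (F,Ψ̿) two left pre-HS-modules over A/k. Then: (1) for every p ∈ ℕ, every nonempty co-ideal Δ ⊆ ℕ^p and every D ∈ HS^p_k(A;Δ), there is a unique k[[s]]_Δ-linear automorphism Ψ^p_Δ(D) of (E⊗_A F)[[s]]_Δ, congruent to the identity modulo classes of series with zero constant term, such that Ψ^p_Δ(D) ∘ μ = μ ∘ (Ψ̄^p_Δ(D) ⊗ Ψ̿^p_Δ(D)), where μ : E[[s]]_Δ ⊗_{k[[s]]_Δ} F[[s]]_Δ → (E⊗_A F)[[s]]_Δ is the natural map μ((Σ e_α s^α) ⊗ (Σ f_α s^α)) = Σ_α (Σ_{α'+α''=α} e_{α'} ⊗ f_{α''}) s^α; (2) the system Ψ = {Ψ^p_Δ} is a left pre-HS-module structure on E⊗_A F over A/k, and it is a HS-module structure whenever Ψ̄ and Ψ̿ are. -/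

import Mathlib

open scoped Classical

namespace HS

/-- multi-indices in `ℕ^p` -/
abbrev MIdx (p : ℕ) := Fin p → ℕ

/-- the total weight `|α|` of a multi-index -/
def wt {p : ℕ} (α : MIdx p) : ℕ := ∑ i, α i

/-- a non-empty co-ideal of `ℕ^p` -/
def IsCoideal {p : ℕ} (Δ : Set (MIdx p)) : Prop :=
  Δ.Nonempty ∧ ∀ ⦃α : MIdx p⦄, α ∈ Δ → ∀ ⦃β : MIdx p⦄, β ≤ α → β ∈ Δ

/-- Convolution product of two power series, given by their coefficient families:
this is the multiplication of `R[[s]]_Δ` (in terms of representatives). -/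
def sconv {p : ℕ} {R : Type*} [NonUnitalNonAssocSemiring R] (f g : MIdx p → R) : MIdx p → R :=
  fun α => ∑ β ∈ Finset.Iic α, f β * g (α - β)

/-- Applying a series of linear operators to a series of module elements; for an
operator family `f`, `fapply f` is the induced `k[[s]]_Δ`-linear map `f̃ = ∑ f_β s^β`. -/
def fapply {p : ℕ} {k M N : Type*} [Semiring k] [AddCommMonoid M] [AddCommMonoid N]
    [Module k M] [Module k N] (f : MIdx p → (M →ₗ[k] N)) (m : MIdx p → M) : MIdx p → N :=
  fun α => ∑ β ∈ Finset.Iic α, f β (m (α - β))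

/-- a series of scalars acting on a series of module elements:
the module structure of `M[[s]]_Δ` over `A[[s]]_Δ` (in terms of representatives). -/
def smul' {p : ℕ} {A M : Type*} [Semiring A] [AddCommMonoid M] [Module A M]
    (a : MIdx p → A) (m : MIdx p → M) : MIdx p → M :=
  fun α => ∑ β ∈ Finset.Iic α, a β • m (α - β)

/-- the unit (delta) series `1` -/
def one' {p : ℕ} {R : Type*} [Zero R] [One R] : MIdx p → R :=
  fun α => if α = 0 then 1 else 0

/-- `D` is a `(p,Δ)`-variate Hasse–Schmidt derivation of `A` over `k`:
`D_0 = id` and the Leibniz rule `D_α(xy) = ∑_{β+γ=α} D_β(x) D_γ(y)` for `α ∈ Δ`. -/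
def IsHS (k A : Type*) [CommRing k] [CommRing A] [Algebra k A] {p : ℕ}
    (Δ : Set (MIdx p)) (D : MIdx p → Module.End k A) : Prop :=
  D 0 = 1 ∧ ∀ α ∈ Δ, ∀ x y : A,
    D α (x * y) = ∑ β ∈ Finset.Iic α, D β x * D (α - β) y

/-- A substitution map `φ : A[[s]]_Δ → A[[t]]_∇`, modelled by the family of its
coefficients `C α e = C_e(φ,α)` (the coefficient of `t^e` in `φ(s^α)`):
it is multiplicative on monomials, unital, of order `≥ 1` (so `C α e = 0` for
`|e| < |α|`), kills the classes of monomials `s^α` with `α ∉ Δ`, and is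
normalized to vanish outside `∇`. -/
structure SubstMap (A : Type*) [CommRing A] (p q : ℕ)
    (Δ : Set (MIdx p)) (nab : Set (MIdx q)) where
  C : MIdx p → MIdx q → A
  c_zero : ∀ e ∈ nab, C 0 e = if e = 0 then 1 else 0
  c_mul : ∀ α ∈ Δ, ∀ β ∈ Δ, ∀ e ∈ nab,
    C (α + β) e = ∑ u ∈ Finset.Iic e, C α u * C β (e - u)
  c_ord : ∀ α ∈ Δ, ∀ e ∈ nab, wt e < wt α → C α e = 0
  c_suppL : ∀ α : MIdx p, α ∉ Δ → ∀ e : MIdx q, C α e = 0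
  c_suppR : ∀ (α : MIdx p) (e : MIdx q), e ∉ nab → C α e = 0

variable {A' : Type*} [CommRing A'] {p' q' : ℕ} {Δ' : Set (MIdx p')} {nab' : Set (MIdx q')}

/-- the map `A[[s]]_Δ → A[[t]]_∇` induced by a substitution map -/
def SubstMap.app (φ : SubstMap A' p' q' Δ' nab') (f : MIdx p' → A') : MIdx q' → A' :=
  fun e => ∑ α ∈ Finset.Iic (fun _ => wt e : MIdx p'), φ.C α e * f α

/-- `φ • D` for a series of `k`-linear endomorphisms of `A` -/
def SubstMap.bulletEnd {k : Type*} [CommRing k] [Algebra k A']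
    (φ : SubstMap A' p' q' Δ' nab') (D : MIdx p' → Module.End k A') :
    MIdx q' → Module.End k A' :=
  fun e => ∑ α ∈ Finset.Iic (fun _ => wt e : MIdx p'), φ.C α e • D α

/-- `φ • r` for a series with coefficients in a `k`-algebra `S` over `A`
(with structural map `ι : A → S`) -/
def SubstMap.bulletS {S : Type*} [Ring S] (ι : A' → S)
    (φ : SubstMap A' p' q' Δ' nab') (r : MIdx p' → S) : MIdx q' → S :=
  fun e => ∑ α ∈ Finset.Iic (fun _ => wt e : MIdx p'), ι (φ.C α e) * r α

/-- `r • φ` for a series with coefficients in a `k`-algebra `S` over `A` -/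
def SubstMap.bulletSR {S : Type*} [Ring S] (ι : A' → S)
    (φ : SubstMap A' p' q' Δ' nab') (r : MIdx p' → S) : MIdx q' → S :=
  fun e => ∑ α ∈ Finset.Iic (fun _ => wt e : MIdx p'), r α * ι (φ.C α e)

/-- `φ • m` for a series with coefficients in an `A`-module `M` -/
def SubstMap.bulletM {M : Type*} [AddCommMonoid M] [Module A' M]
    (φ : SubstMap A' p' q' Δ' nab') (m : MIdx p' → M) : MIdx q' → M :=
  fun e => ∑ α ∈ Finset.Iic (fun _ => wt e : MIdx p'), φ.C α e • m α

/-- `φ` has constant coefficients, i.e. all the `C_e(φ,α)` come from `k` -/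
def SubstMap.HasConstCoeffs (k : Type*) [CommRing k] [Algebra k A']
    (φ : SubstMap A' p' q' Δ' nab') : Prop :=
  ∀ (α : MIdx p') (e : MIdx q'), φ.C α e ∈ Set.range (algebraMap k A')

/-- a system of maps `Ψ^p_Δ : HS^p_k(A;Δ) → U^p(End_k(M);Δ)` as in a
(pre-)HS-module structure on `M` over `A/k` -/
abbrev HSSystem (k A M : Type*) [CommRing k] [CommRing A] [Algebra k A]
    [AddCommMonoid M] [Module k M] : Type _ :=
  ∀ (p : ℕ) (Δ : Set (MIdx p)), (MIdx p → Module.End k A) → (MIdx p → Module.End k M)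

/-- `Ψ` is a left pre-HS-module structure on `M` over `A/k`:  for each `p`, each
non-empty co-ideal `Δ ⊆ ℕ^p` and each `D ∈ HS^p_k(A;Δ)`, the automorphism
`Ψ^p_Δ(D)` of `M[[s]]_Δ` (given by its family of coefficients in `End_k(M)`) has
constant coefficient the identity, depends only on the class of `D`, is
multiplicative in `D`, is invertible, satisfies the Leibniz rule
`Ψ^p_Δ(D)·a = D̃(a)·Ψ^p_Δ(D)`, and is compatible with the action of substitution
maps with constant coefficients:  `Ψ^q_∇(φ•D) = φ•Ψ^p_Δ(D)`. -/
def IsPreHSMod (k A M : Type*) [CommRing k] [CommRing A] [Algebra k A]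
    [AddCommGroup M] [Module k M] [Module A M] [IsScalarTower k A M]
    (Ψ : HSSystem k A M) : Prop :=
  ∀ (p : ℕ) (Δ : Set (MIdx p)), IsCoideal Δ →
    ∀ D : MIdx p → Module.End k A, IsHS k A Δ D →
      (Ψ p Δ D 0 = 1)
      ∧ (∀ D' : MIdx p → Module.End k A, IsHS k A Δ D' → (∀ α ∈ Δ, D α = D' α) →
          ∀ α ∈ Δ, Ψ p Δ D α = Ψ p Δ D' α)
      ∧ (∀ E : MIdx p → Module.End k A, IsHS k A Δ E →
          ∀ α ∈ Δ, Ψ p Δ (sconv D E) α = sconv (Ψ p Δ D) (Ψ p Δ E) α)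
      ∧ (∃ Θ : MIdx p → Module.End k M,
          (∀ α ∈ Δ, sconv (Ψ p Δ D) Θ α = (one' : MIdx p → Module.End k M) α)
          ∧ (∀ α ∈ Δ, sconv Θ (Ψ p Δ D) α = (one' : MIdx p → Module.End k M) α))
      ∧ (∀ (a : MIdx p → A) (m : MIdx p → M), ∀ α ∈ Δ,
          fapply (Ψ p Δ D) (smul' a m) α = smul' (fapply D a) (fapply (Ψ p Δ D) m) α)
      ∧ (∀ (q : ℕ) (nab : Set (MIdx q)), IsCoideal nab →
          ∀ φ : SubstMap A p q Δ nab, φ.HasConstCoeffs k →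
          ∀ e ∈ nab, ∀ x : M,
            Ψ q nab (φ.bulletEnd D) e x
              = ∑ α ∈ Finset.Iic (fun _ => wt e : MIdx p), φ.C α e • Ψ p Δ D α x)

/-- `Ψ` is a left HS-module structure on `M` over `A/k`: as `IsPreHSMod`, but with
compatibility with the action of arbitrary substitution maps. -/
def IsHSMod (k A M : Type*) [CommRing k] [CommRing A] [Algebra k A]
    [AddCommGroup M] [Module k M] [Module A M] [IsScalarTower k A M]
    (Ψ : HSSystem k A M) : Prop :=
  ∀ (p : ℕ) (Δ : Set (MIdx p)), IsCoideal Δ →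
    ∀ D : MIdx p → Module.End k A, IsHS k A Δ D →
      (Ψ p Δ D 0 = 1)
      ∧ (∀ D' : MIdx p → Module.End k A, IsHS k A Δ D' → (∀ α ∈ Δ, D α = D' α) →
          ∀ α ∈ Δ, Ψ p Δ D α = Ψ p Δ D' α)
      ∧ (∀ E : MIdx p → Module.End k A, IsHS k A Δ E →
          ∀ α ∈ Δ, Ψ p Δ (sconv D E) α = sconv (Ψ p Δ D) (Ψ p Δ E) α)
      ∧ (∃ Θ : MIdx p → Module.End k M,
          (∀ α ∈ Δ, sconv (Ψ p Δ D) Θ α = (one' : MIdx p → Module.End k M) α)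
          ∧ (∀ α ∈ Δ, sconv Θ (Ψ p Δ D) α = (one' : MIdx p → Module.End k M) α))
      ∧ (∀ (a : MIdx p → A) (m : MIdx p → M), ∀ α ∈ Δ,
          fapply (Ψ p Δ D) (smul' a m) α = smul' (fapply D a) (fapply (Ψ p Δ D) m) α)
      ∧ (∀ (q : ℕ) (nab : Set (MIdx q)), IsCoideal nab →
          ∀ φ : SubstMap A p q Δ nab,
          ∀ e ∈ nab, ∀ x : M,
            Ψ q nab (φ.bulletEnd D) e x
              = ∑ α ∈ Finset.Iic (fun _ => wt e : MIdx p), φ.C α e • Ψ p Δ D α x)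

open scoped TensorProduct

/-- the natural map `μ : E[[s]]_Δ ⊗_{k[[s]]_Δ} F[[s]]_Δ → (E ⊗_A F)[[s]]_Δ`
evaluated on a pure tensor of series -/
noncomputable def muconv {A E F : Type*} [CommRing A]
    [AddCommGroup E] [Module A E] [AddCommGroup F] [Module A F] {p : ℕ}
    (eS : MIdx p → E) (fS : MIdx p → F) : MIdx p → E ⊗[A] F :=
  fun α => ∑ β ∈ Finset.Iic α, eS β ⊗ₜ[A] fS (α - β)


/-! ### Auxiliary combinatorial lemmas on multi-indices -/

section Combinatorics

variable {p : ℕ} {M : Type*} [AddCommMonoid M]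

lemma zero_mem_coideal {Δ : Set (MIdx p)} (hΔ : IsCoideal Δ) : (0 : MIdx p) ∈ Δ := by
  obtain ⟨α, hα⟩ := hΔ.1
  exact hΔ.2 hα zero_le

lemma mem_coideal_of_le {Δ : Set (MIdx p)} (hΔ : IsCoideal Δ) {α β : MIdx p}
    (hα : α ∈ Δ) (h : β ≤ α) : β ∈ Δ := hΔ.2 hα h

lemma Iic_zero : Finset.Iic (0 : MIdx p) = {0} := by
  ext β; simp [Finset.mem_Iic, le_zero_iff]

lemma wt_le {β α : MIdx p} (h : β ≤ α) : wt β ≤ wt α := Finset.sum_le_sum fun i _ => h i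

lemma wt_sub {β α : MIdx p} (h : β ≤ α) : wt (α - β) = wt α - wt β := by
  unfold wt
  exact Finset.sum_tsub_distrib Finset.univ (fun i _ => h i)

lemma wt_pos {β : MIdx p} (h : β ≠ 0) : 0 < wt β := by
  rcases Function.ne_iff.mp h with ⟨i, hi⟩
  calc 0 < β i := Nat.pos_of_ne_zero (by simpa using hi)
    _ ≤ wt β := Finset.single_le_sum (fun _ _ => Nat.zero_le _) (Finset.mem_univ i)

lemma wt_sub_lt {β α : MIdx p} (h : β ≤ α) (h0 : β ≠ 0) : wt (α - β) < wt α := by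
  rw [wt_sub h]
  exact Nat.sub_lt_of_pos_le (wt_pos h0) (wt_le h)

lemma comp_le_wt (α : MIdx p) (i : Fin p) : α i ≤ wt α :=
  Finset.single_le_sum (fun _ _ => Nat.zero_le _) (Finset.mem_univ i)

lemma Iic_triple (α : MIdx p) (F : MIdx p → MIdx p → MIdx p → M) :
    ∑ β ∈ Finset.Iic α, ∑ u ∈ Finset.Iic β, F u (β - u) (α - β)
      = ∑ u ∈ Finset.Iic α, ∑ v ∈ Finset.Iic (α - u), F u v (α - u - v) := by
  rw [Finset.sum_sigma', Finset.sum_sigma']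
  refine Finset.sum_bij' (fun x _ => ⟨x.2, x.1 - x.2⟩)
    (fun y _ => ⟨y.1 + y.2, y.1⟩) ?_ ?_ ?_ ?_ ?_
  · rintro ⟨β, u⟩ hx
    simp only [Finset.mem_sigma, Finset.mem_Iic] at hx ⊢
    exact ⟨hx.2.trans hx.1, tsub_le_tsub_right hx.1 _⟩
  · rintro ⟨u, v⟩ hy
    simp only [Finset.mem_sigma, Finset.mem_Iic] at hy ⊢
    exact ⟨(le_tsub_iff_left hy.1).mp hy.2, le_self_add⟩
  · rintro ⟨β, u⟩ hx
    simp only [Finset.mem_sigma, Finset.mem_Iic] at hx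
    simp [add_tsub_cancel_of_le hx.2]
  · rintro ⟨u, v⟩ hy
    simp
  · rintro ⟨β, u⟩ hx
    simp only [Finset.mem_sigma, Finset.mem_Iic] at hx
    simp [tsub_tsub, add_tsub_cancel_of_le hx.2]

lemma Iic_swap (α : MIdx p) (F : MIdx p → MIdx p → M) :
    ∑ b ∈ Finset.Iic α, ∑ c ∈ Finset.Iic (α - b), F b c
      = ∑ c ∈ Finset.Iic α, ∑ b ∈ Finset.Iic (α - c), F b c := by
  rw [Finset.sum_sigma', Finset.sum_sigma']
  refine Finset.sum_bij' (fun x _ => ⟨x.2, x.1⟩) (fun y _ => ⟨y.2, y.1⟩) ?_ ?_ ?_ ?_ ?_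
  · rintro ⟨b, c⟩ hx
    simp only [Finset.mem_sigma, Finset.mem_Iic] at hx ⊢
    refine ⟨hx.2.trans tsub_le_self, ?_⟩
    have h := (le_tsub_iff_left hx.1).mp hx.2
    exact (le_tsub_iff_left (hx.2.trans tsub_le_self)).mpr (by rwa [add_comm])
  · rintro ⟨c, b⟩ hy
    simp only [Finset.mem_sigma, Finset.mem_Iic] at hy ⊢
    refine ⟨hy.2.trans tsub_le_self, ?_⟩
    have h := (le_tsub_iff_left hy.1).mp hy.2
    exact (le_tsub_iff_left (hy.2.trans tsub_le_self)).mpr (by rwa [add_comm])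
  · rintro ⟨b, c⟩ _; rfl
  · rintro ⟨c, b⟩ _; rfl
  · rintro ⟨b, c⟩ _; rfl

lemma Iic_quad (α : MIdx p) (G : MIdx p → MIdx p → MIdx p → MIdx p → M) :
    ∑ β ∈ Finset.Iic α, ∑ u ∈ Finset.Iic (α - β), ∑ v ∈ Finset.Iic β,
        G v u (β - v) (α - β - u)
      = ∑ γ ∈ Finset.Iic α, ∑ u ∈ Finset.Iic γ, ∑ v ∈ Finset.Iic (α - γ),
        G u (γ - u) v (α - γ - v) := by
  have L : ∑ β ∈ Finset.Iic α, ∑ u ∈ Finset.Iic (α - β), ∑ v ∈ Finset.Iic β,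
        G v u (β - v) (α - β - u)
      = ∑ a ∈ Finset.Iic α, ∑ b ∈ Finset.Iic (α - a), ∑ c ∈ Finset.Iic (α - a - b),
        G a c b (α - a - b - c) := by
    have h := Iic_triple α (fun v x r => ∑ u ∈ Finset.Iic r, G v u x (r - u))
    rw [← h]
    exact Finset.sum_congr rfl fun β _ => Finset.sum_comm
  have R : ∑ γ ∈ Finset.Iic α, ∑ u ∈ Finset.Iic γ, ∑ v ∈ Finset.Iic (α - γ),
        G u (γ - u) v (α - γ - v)
      = ∑ a ∈ Finset.Iic α, ∑ b ∈ Finset.Iic (α - a), ∑ c ∈ Finset.Iic (α - a - b),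
        G a b c (α - a - b - c) :=
    Iic_triple α (fun u x r => ∑ v ∈ Finset.Iic r, G u x v (r - v))
  rw [L, R]
  refine Finset.sum_congr rfl fun a _ => ?_
  rw [Iic_swap (α - a) (fun b c => G a c b (α - a - b - c))]
  exact Finset.sum_congr rfl fun b _ => Finset.sum_congr rfl fun c _ => by rw [tsub_right_comm]

end Combinatorics

/-! ### Convolution inverses -/

section Sinv

variable {p : ℕ} {R : Type*} [Ring R]

noncomputable def sinv (f : MIdx p → R) : MIdx p → R
  | α =>
    if α = 0 then 1
    else - ∑ β ∈ ((Finset.Iic α).erase 0).attach, f β.1 * sinv f (α - β.1)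
  termination_by α => wt α
  decreasing_by
    have hβ := β.2
    rw [Finset.mem_erase, Finset.mem_Iic] at hβ
    exact wt_sub_lt hβ.2 hβ.1

lemma sinv_zero (f : MIdx p → R) : sinv f 0 = 1 := by rw [sinv]; simp

lemma one'_sconv (f : MIdx p → R) : sconv one' f = f := by
  funext α
  rw [sconv, Finset.sum_eq_single 0]
  · simp [one']
  · intro b _ hb; simp [one', hb]
  · intro h; exact absurd (Finset.mem_Iic.mpr (zero_le : (0 : MIdx p) ≤ α)) h

lemma sconv_one' (f : MIdx p → R) : sconv f one' = f := by
  funext α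
  rw [sconv, Finset.sum_eq_single α]
  · simp [one']
  · intro b hb hbne
    rw [Finset.mem_Iic] at hb
    have : α - b ≠ 0 := fun hc => hbne (le_antisymm hb (tsub_eq_zero_iff_le.mp hc))
    simp [one', this]
  · intro h; exact absurd (Finset.mem_Iic.mpr le_rfl) h

lemma sconv_assoc (f g h : MIdx p → R) : sconv (sconv f g) h = sconv f (sconv g h) := by
  funext α
  show ∑ β ∈ Finset.Iic α, (∑ u ∈ Finset.Iic β, f u * g (β - u)) * h (α - β)
      = ∑ u ∈ Finset.Iic α, f u * ∑ v ∈ Finset.Iic (α - u), g v * h (α - u - v)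
  calc ∑ β ∈ Finset.Iic α, (∑ u ∈ Finset.Iic β, f u * g (β - u)) * h (α - β)
      = ∑ β ∈ Finset.Iic α, ∑ u ∈ Finset.Iic β, f u * (g (β - u) * h (α - β)) := by
        refine Finset.sum_congr rfl fun β _ => ?_
        rw [Finset.sum_mul]
        exact Finset.sum_congr rfl fun u _ => mul_assoc _ _ _
    _ = ∑ u ∈ Finset.Iic α, ∑ v ∈ Finset.Iic (α - u), f u * (g v * h (α - u - v)) :=
        Iic_triple α (fun a b c => f a * (g b * h c))
    _ = _ := Finset.sum_congr rfl fun u _ => (Finset.mul_sum _ _ _).symm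

lemma sconv_sinv (f : MIdx p → R) (hf : f 0 = 1) : sconv f (sinv f) = one' := by
  funext α
  by_cases h : α = 0
  · subst h
    rw [sconv, Iic_zero]
    simp [one', hf, sinv_zero]
  · rw [sconv, ← Finset.add_sum_erase _ _ (Finset.mem_Iic.mpr (zero_le : (0 : MIdx p) ≤ α)), one', if_neg h]
    have hs : sinv f α = - ∑ β ∈ ((Finset.Iic α).erase 0), f β * sinv f (α - β) := by
      rw [sinv, if_neg h,
        Finset.sum_attach ((Finset.Iic α).erase 0) (fun β => f β * sinv f (α - β))]
    rw [tsub_zero, hf, one_mul, hs, neg_add_cancel]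

lemma sinv_sconv (f : MIdx p → R) (hf : f 0 = 1) : sconv (sinv f) f = one' := by
  have hg : sinv f 0 = 1 := sinv_zero f
  have h1 : sconv f (sinv f) = one' := sconv_sinv f hf
  have h2 : sconv (sinv f) (sinv (sinv f)) = one' := sconv_sinv _ hg
  have hfe : f = sinv (sinv f) := by
    calc f = sconv f one' := (sconv_one' f).symm
      _ = sconv f (sconv (sinv f) (sinv (sinv f))) := by rw [h2]
      _ = sconv (sconv f (sinv f)) (sinv (sinv f)) := (sconv_assoc _ _ _).symm
      _ = sconv one' (sinv (sinv f)) := by rw [h1]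
      _ = sinv (sinv f) := one'_sconv _
  nth_rewrite 2 [hfe]
  exact h2

end Sinv

/-! ### Delta (constant) series -/

section Delta

variable {p : ℕ}

/-- the constant series with value `m` (i.e. `m` at `s^0`) -/
def dser {M : Type*} [Zero M] (m : M) : MIdx p → M := fun γ => if γ = 0 then m else 0

lemma fapply_dser {k M N : Type*} [Semiring k] [AddCommMonoid M] [AddCommMonoid N]
    [Module k M] [Module k N] (f : MIdx p → (M →ₗ[k] N)) (m : M) (α : MIdx p) :
    fapply f (dser m) α = f α m := by
  unfold fapply dser
  rw [Finset.sum_eq_single α]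
  · simp
  · intro b hb hne
    rw [Finset.mem_Iic] at hb
    have : α - b ≠ 0 := fun hc => hne (le_antisymm hb (tsub_eq_zero_iff_le.mp hc))
    rw [if_neg this, map_zero]
  · intro h; exact absurd (Finset.mem_Iic.mpr le_rfl) h

lemma smul'_dser {A M : Type*} [Semiring A] [AddCommMonoid M] [Module A M] (a : A) (m : M) :
    smul' (dser a) (dser m) = (dser (a • m) : MIdx p → M) := by
  funext γ
  unfold smul' dser
  by_cases hγ : γ = 0
  · subst hγ
    rw [Iic_zero, Finset.sum_singleton]
    simp
  · rw [if_neg hγ]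
    refine Finset.sum_eq_zero fun b _ => ?_
    by_cases hb : b = 0
    · subst hb
      rw [tsub_zero, if_neg hγ, smul_zero]
    · rw [if_neg hb, zero_smul]

open scoped TensorProduct in
lemma muconv_dser {A E F : Type*} [CommRing A]
    [AddCommGroup E] [Module A E] [AddCommGroup F] [Module A F] (x : E) (y : F) :
    muconv (dser x) (dser y) = (dser (x ⊗ₜ[A] y) : MIdx p → E ⊗[A] F) := by
  funext γ
  unfold muconv dser
  by_cases hγ : γ = 0
  · subst hγ
    rw [Iic_zero, Finset.sum_singleton]
    simp
  · rw [if_neg hγ]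
    refine Finset.sum_eq_zero fun b _ => ?_
    by_cases hb : b = 0
    · subst hb
      rw [tsub_zero, if_neg hγ, TensorProduct.tmul_zero]
    · rw [if_neg hb, TensorProduct.zero_tmul]

end Delta


/-! ### Substitution-map combinatorics -/

section Subst

variable {A : Type*} [CommRing A] {p q : ℕ} {Δ : Set (MIdx p)} {nab : Set (MIdx q)}

lemma C_eq_zero_of_wt_lt (φ : SubstMap A p q Δ nab) {α : MIdx p} {e : MIdx q}
    (he : e ∈ nab) (h : wt e < wt α) : φ.C α e = 0 := by
  by_cases hα : α ∈ Δ
  · exact φ.c_ord α hα e he h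
  · exact φ.c_suppL α hα e

lemma substKey (hΔ : IsCoideal Δ) (hnab : IsCoideal nab)
    (φ : SubstMap A p q Δ nab) {e : MIdx q} (he : e ∈ nab)
    {M₁ M₂ M₃ : Type*} [AddCommMonoid M₁] [Module A M₁] [AddCommMonoid M₂] [Module A M₂]
    [AddCommMonoid M₃] [Module A M₃]
    (B : M₁ →ₗ[A] M₂ →ₗ[A] M₃) (g₁ : MIdx p → M₁) (g₂ : MIdx p → M₂) :
    ∑ u ∈ Finset.Iic e,
      B (∑ β ∈ Finset.Iic (fun _ => wt u : MIdx p), φ.C β u • g₁ β)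
        (∑ γ ∈ Finset.Iic (fun _ => wt (e - u) : MIdx p), φ.C γ (e - u) • g₂ γ)
    = ∑ α ∈ Finset.Iic (fun _ => wt e : MIdx p), ∑ β ∈ Finset.Iic α,
        φ.C α e • B (g₁ β) (g₂ (α - β)) := by
  set N : MIdx p := (fun _ => wt e) with hN
  -- the middle form
  have hCzero : ∀ β' γ' : MIdx p, wt e < wt (β' + γ') → φ.C (β' + γ') e = 0 := by
    intro β' γ' h
    exact C_eq_zero_of_wt_lt φ he h
  have hR : (∑ α ∈ Finset.Iic N, ∑ β ∈ Finset.Iic α, φ.C α e • B (g₁ β) (g₂ (α - β)))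
      = ∑ β ∈ Finset.Iic N, ∑ γ ∈ Finset.Iic N, φ.C (β + γ) e • B (g₁ β) (g₂ γ) := by
    have h1 : (∑ α ∈ Finset.Iic N, ∑ β ∈ Finset.Iic α, φ.C α e • B (g₁ β) (g₂ (α - β)))
        = ∑ α ∈ Finset.Iic N, ∑ β ∈ Finset.Iic α,
            φ.C (β + (α - β)) e • B (g₁ β) (g₂ (α - β)) := by
      refine Finset.sum_congr rfl fun α _ => Finset.sum_congr rfl fun β hβ => ?_
      rw [add_tsub_cancel_of_le (Finset.mem_Iic.mp hβ)]
    rw [h1, Iic_triple N (fun b c _ => φ.C (b + c) e • B (g₁ b) (g₂ c))]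
    refine Finset.sum_congr rfl fun β hβ => ?_
    refine Finset.sum_subset (Finset.Iic_subset_Iic.mpr tsub_le_self) ?_
    intro γ hγN hγ
    rw [Finset.mem_Iic] at hβ hγN
    have hwt : wt e < wt (β + γ) := by
      obtain ⟨i, hi⟩ : ∃ i, ¬ γ i ≤ (N - β) i := by
        by_contra hc
        push_neg at hc
        exact (fun hle => hγ (Finset.mem_Iic.mpr hle)) (fun i => hc i)
      have hβi : β i ≤ wt e := hβ i
      have hγi : wt e - β i < γ i := by
        have : (N - β) i = wt e - β i := rfl
        omega
      calc wt e < β i + γ i := by omega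
        _ = (β + γ) i := rfl
        _ ≤ wt (β + γ) := comp_le_wt _ i
    rw [hCzero β γ hwt, zero_smul]
  have hL : (∑ u ∈ Finset.Iic e,
      B (∑ β ∈ Finset.Iic (fun _ => wt u : MIdx p), φ.C β u • g₁ β)
        (∑ γ ∈ Finset.Iic (fun _ => wt (e - u) : MIdx p), φ.C γ (e - u) • g₂ γ))
      = ∑ β ∈ Finset.Iic N, ∑ γ ∈ Finset.Iic N, φ.C (β + γ) e • B (g₁ β) (g₂ γ) := by
    have hvan : ∀ u' : MIdx q, u' ∈ nab → wt u' ≤ wt e → ∀ β ∈ Finset.Iic N,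
        β ∉ Finset.Iic (fun _ => wt u' : MIdx p) → φ.C β u' = 0 := by
      intro u' hu' hwt β hβN hβ
      obtain ⟨i, hi⟩ : ∃ i, ¬ β i ≤ wt u' := by
        by_contra hc
        push_neg at hc
        exact hβ (Finset.mem_Iic.mpr (fun i => hc i))
      have : wt u' < wt β := lt_of_lt_of_le (by omega) (comp_le_wt β i)
      exact C_eq_zero_of_wt_lt φ hu' this
    have hext1 : ∀ u' : MIdx q, u' ∈ nab → wt u' ≤ wt e →
        (∑ β ∈ Finset.Iic (fun _ => wt u' : MIdx p), φ.C β u' • g₁ β)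
          = ∑ β ∈ Finset.Iic N, φ.C β u' • g₁ β := by
      intro u' hu' hwt
      refine Finset.sum_subset (Finset.Iic_subset_Iic.mpr (fun _ => hwt)) ?_
      intro β hβN hβ
      rw [hvan u' hu' hwt β hβN hβ, zero_smul]
    have hext2 : ∀ u' : MIdx q, u' ∈ nab → wt u' ≤ wt e →
        (∑ γ ∈ Finset.Iic (fun _ => wt u' : MIdx p), φ.C γ u' • g₂ γ)
          = ∑ γ ∈ Finset.Iic N, φ.C γ u' • g₂ γ := by
      intro u' hu' hwt
      refine Finset.sum_subset (Finset.Iic_subset_Iic.mpr (fun _ => hwt)) ?_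
      intro γ hγN hγ
      rw [hvan u' hu' hwt γ hγN hγ, zero_smul]
    calc (∑ u ∈ Finset.Iic e,
        B (∑ β ∈ Finset.Iic (fun _ => wt u : MIdx p), φ.C β u • g₁ β)
          (∑ γ ∈ Finset.Iic (fun _ => wt (e - u) : MIdx p), φ.C γ (e - u) • g₂ γ))
        = ∑ u ∈ Finset.Iic e,
            B (∑ β ∈ Finset.Iic N, φ.C β u • g₁ β)
              (∑ γ ∈ Finset.Iic N, φ.C γ (e - u) • g₂ γ) := by
          refine Finset.sum_congr rfl fun u hu => ?_
          rw [Finset.mem_Iic] at hu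
          rw [hext1 u (mem_coideal_of_le hnab he hu) (wt_le hu),
            hext2 (e - u) (mem_coideal_of_le hnab he tsub_le_self) (wt_le tsub_le_self)]
      _ = ∑ u ∈ Finset.Iic e, ∑ β ∈ Finset.Iic N, ∑ γ ∈ Finset.Iic N,
            (φ.C β u * φ.C γ (e - u)) • B (g₁ β) (g₂ γ) := by
          refine Finset.sum_congr rfl fun u _ => ?_
          simp only [map_sum, LinearMap.sum_apply, map_smul, LinearMap.smul_apply,
            Finset.smul_sum, smul_smul]
          rw [Finset.sum_comm]
          exact Finset.sum_congr rfl fun β _ => Finset.sum_congr rfl fun γ _ => by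
            rw [mul_comm]
      _ = ∑ β ∈ Finset.Iic N, ∑ γ ∈ Finset.Iic N,
            (∑ u ∈ Finset.Iic e, φ.C β u * φ.C γ (e - u)) • B (g₁ β) (g₂ γ) := by
          rw [Finset.sum_comm]
          refine Finset.sum_congr rfl fun β _ => ?_
          rw [Finset.sum_comm]
          refine Finset.sum_congr rfl fun γ _ => ?_
          rw [Finset.sum_smul]
      _ = ∑ β ∈ Finset.Iic N, ∑ γ ∈ Finset.Iic N, φ.C (β + γ) e • B (g₁ β) (g₂ γ) := by
          refine Finset.sum_congr rfl fun β _ => Finset.sum_congr rfl fun γ _ => ?_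
          by_cases hβ : β ∈ Δ
          · by_cases hγ : γ ∈ Δ
            · rw [← φ.c_mul β hβ γ hγ e he]
            · have h1 : ∀ u : MIdx q, φ.C γ (e - u) = 0 := fun u => φ.c_suppL γ hγ _
              have h2 : φ.C (β + γ) e = 0 := by
                refine φ.c_suppL _ (fun hc => hγ ?_) e
                exact mem_coideal_of_le hΔ hc le_add_self
              simp [h1, h2]
          · have h1 : ∀ u : MIdx q, φ.C β u = 0 := fun u => φ.c_suppL β hβ _
            have h2 : φ.C (β + γ) e = 0 := by
              refine φ.c_suppL _ (fun hc => hβ ?_) e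
              exact mem_coideal_of_le hΔ hc le_self_add
            simp [h1, h2]
  rw [hL, hR]

end Subst


/-! ### Stability of HS derivations -/

section HSDer

variable {k A : Type*} [CommRing k] [CommRing A] [Algebra k A] {p : ℕ} {Δ : Set (MIdx p)}

lemma sconv_isHS (hΔ : IsCoideal Δ) {D E : MIdx p → Module.End k A}
    (hD : IsHS k A Δ D) (hE : IsHS k A Δ E) : IsHS k A Δ (sconv D E) := by
  constructor
  · show sconv D E 0 = 1
    unfold sconv
    rw [Iic_zero, Finset.sum_singleton]
    simp [hD.1, hE.1]
  · intro α hα x y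
    calc sconv D E α (x * y)
        = ∑ β ∈ Finset.Iic α, D β (E (α - β) (x * y)) := by
          simp [sconv, LinearMap.sum_apply, Module.End.mul_apply]
      _ = ∑ β ∈ Finset.Iic α, ∑ u ∈ Finset.Iic (α - β), ∑ v ∈ Finset.Iic β,
            D v (E u x) * D (β - v) (E (α - β - u) y) := by
          refine Finset.sum_congr rfl fun β hβ => ?_
          rw [Finset.mem_Iic] at hβ
          rw [hE.2 (α - β) (mem_coideal_of_le hΔ hα tsub_le_self) x y, map_sum]
          exact Finset.sum_congr rfl fun u _ =>
            hD.2 β (mem_coideal_of_le hΔ hα hβ) _ _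
      _ = ∑ γ ∈ Finset.Iic α, ∑ u ∈ Finset.Iic γ, ∑ v ∈ Finset.Iic (α - γ),
            D u (E (γ - u) x) * D v (E (α - γ - v) y) :=
          Iic_quad α (fun a b c d => D a (E b x) * D c (E d y))
      _ = ∑ γ ∈ Finset.Iic α, sconv D E γ x * sconv D E (α - γ) y := by
          refine Finset.sum_congr rfl fun γ _ => ?_
          simp only [sconv, LinearMap.sum_apply, Module.End.mul_apply, Finset.sum_mul,
            Finset.mul_sum]
          exact Finset.sum_comm

lemma bullet_isHS {q : ℕ} {nab : Set (MIdx q)} (hΔ : IsCoideal Δ) (hnab : IsCoideal nab)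
    (φ : SubstMap A p q Δ nab) {D : MIdx p → Module.End k A} (hD : IsHS k A Δ D) :
    IsHS k A nab (φ.bulletEnd D) := by
  constructor
  · show φ.bulletEnd D 0 = 1
    unfold SubstMap.bulletEnd
    have h0 : (fun _ => wt (0 : MIdx q) : MIdx p) = 0 := by
      funext i; simp [wt]
    rw [h0, Iic_zero, Finset.sum_singleton, φ.c_zero 0 (zero_mem_coideal hnab), if_pos rfl,
      hD.1, one_smul]
  · intro e he x y
    calc φ.bulletEnd D e (x * y)
        = ∑ α ∈ Finset.Iic (fun _ => wt e : MIdx p), φ.C α e • D α (x * y) := by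
          simp [SubstMap.bulletEnd, LinearMap.sum_apply, LinearMap.smul_apply]
      _ = ∑ α ∈ Finset.Iic (fun _ => wt e : MIdx p), ∑ β ∈ Finset.Iic α,
            φ.C α e • (LinearMap.mul A A) (D β x) (D (α - β) y) := by
          refine Finset.sum_congr rfl fun α _ => ?_
          by_cases hα : α ∈ Δ
          · rw [hD.2 α hα x y, Finset.smul_sum]
            exact Finset.sum_congr rfl fun β _ => rfl
          · simp [φ.c_suppL α hα]
      _ = ∑ u ∈ Finset.Iic e,
            (LinearMap.mul A A)
              (∑ β ∈ Finset.Iic (fun _ => wt u : MIdx p), φ.C β u • D β x)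
              (∑ γ ∈ Finset.Iic (fun _ => wt (e - u) : MIdx p), φ.C γ (e - u) • D γ y) :=
          (substKey hΔ hnab φ he (LinearMap.mul A A) (fun β => D β x) (fun γ => D γ y)).symm
      _ = ∑ u ∈ Finset.Iic e, φ.bulletEnd D u x * φ.bulletEnd D (e - u) y := by
          refine Finset.sum_congr rfl fun u _ => ?_
          simp only [SubstMap.bulletEnd, LinearMap.sum_apply, LinearMap.smul_apply,
            LinearMap.mul_apply', smul_eq_mul, Finset.sum_mul, Finset.mul_sum]

end HSDer

/-! ### Scalar Leibniz rule extracted from the module-theoretic one -/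

section PsiSmul

variable {k A : Type*} [CommRing k] [CommRing A] [Algebra k A] {p : ℕ} {Δ : Set (MIdx p)}
variable {M : Type*} [AddCommGroup M] [Module k M] [Module A M]

lemma psi_smul_of_leib {Ψv : MIdx p → Module.End k M} {D : MIdx p → Module.End k A}
    (hLeib : ∀ (a : MIdx p → A) (m : MIdx p → M), ∀ α ∈ Δ,
      fapply Ψv (smul' a m) α = smul' (fapply D a) (fapply Ψv m) α)
    {β : MIdx p} (hβ : β ∈ Δ) (a : A) (m : M) :
    Ψv β (a • m) = ∑ γ ∈ Finset.Iic β, D γ a • Ψv (β - γ) m := by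
  have h := hLeib (dser a) (dser m) β hβ
  rw [smul'_dser, fapply_dser] at h
  rw [h]
  unfold smul'
  exact Finset.sum_congr rfl fun γ _ => by rw [fapply_dser, fapply_dser]

end PsiSmul


/-! ### The tensor-product automorphisms -/

open scoped TensorProduct

section Tensor

variable {k A E F : Type*} [CommRing k] [CommRing A] [Algebra k A]
    [AddCommGroup E] [Module k E] [Module A E] [IsScalarTower k A E]
    [AddCommGroup F] [Module k F] [Module A F] [IsScalarTower k A F]
variable {p : ℕ} {Δ : Set (MIdx p)}

lemma end_ext {g h : Module.End k (E ⊗[A] F)}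
    (H : ∀ (x : E) (y : F), g (x ⊗ₜ[A] y) = h (x ⊗ₜ[A] y)) : g = h := by
  apply LinearMap.ext; intro t
  induction t using TensorProduct.induction_on with
  | zero => simp
  | tmul x y => exact H x y
  | add a b ha hb => simp [map_add, ha, hb]

lemma formula_of_mu {Θv : MIdx p → Module.End k (E ⊗[A] F)}
    {Ψ₁v : MIdx p → Module.End k E} {Ψ₂v : MIdx p → Module.End k F}
    (hmu : ∀ (eS : MIdx p → E) (fS : MIdx p → F), ∀ α ∈ Δ,
      fapply Θv (muconv eS fS) α = muconv (fapply Ψ₁v eS) (fapply Ψ₂v fS) α)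
    {α : MIdx p} (hα : α ∈ Δ) (x : E) (y : F) :
    Θv α (x ⊗ₜ[A] y) = ∑ β ∈ Finset.Iic α, Ψ₁v β x ⊗ₜ[A] Ψ₂v (α - β) y := by
  have h := hmu (dser x) (dser y) α hα
  rw [muconv_dser, fapply_dser] at h
  rw [h]
  unfold muconv
  exact Finset.sum_congr rfl fun β _ => by rw [fapply_dser, fapply_dser]

lemma mu_of_formula (hΔ : IsCoideal Δ) {Θv : MIdx p → Module.End k (E ⊗[A] F)}
    {Ψ₁v : MIdx p → Module.End k E} {Ψ₂v : MIdx p → Module.End k F}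
    (hform : ∀ α ∈ Δ, ∀ (x : E) (y : F),
      Θv α (x ⊗ₜ[A] y) = ∑ β ∈ Finset.Iic α, Ψ₁v β x ⊗ₜ[A] Ψ₂v (α - β) y) :
    ∀ (eS : MIdx p → E) (fS : MIdx p → F), ∀ α ∈ Δ,
      fapply Θv (muconv eS fS) α = muconv (fapply Ψ₁v eS) (fapply Ψ₂v fS) α := by
  intro eS fS α hα
  calc fapply Θv (muconv eS fS) α
      = ∑ β ∈ Finset.Iic α, ∑ u ∈ Finset.Iic (α - β), ∑ v ∈ Finset.Iic β,
          Ψ₁v v (eS u) ⊗ₜ[A] Ψ₂v (β - v) (fS (α - β - u)) := by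
        unfold fapply muconv
        refine Finset.sum_congr rfl fun β hβ => ?_
        rw [map_sum]
        refine Finset.sum_congr rfl fun u _ => ?_
        rw [hform β (mem_coideal_of_le hΔ hα (Finset.mem_Iic.mp hβ)) _ _]
    _ = ∑ γ ∈ Finset.Iic α, ∑ u ∈ Finset.Iic γ, ∑ v ∈ Finset.Iic (α - γ),
          Ψ₁v u (eS (γ - u)) ⊗ₜ[A] Ψ₂v v (fS (α - γ - v)) :=
        Iic_quad α (fun a b c d => Ψ₁v a (eS b) ⊗ₜ[A] Ψ₂v c (fS d))
    _ = muconv (fapply Ψ₁v eS) (fapply Ψ₂v fS) α := by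
        unfold muconv fapply
        refine (Finset.sum_congr rfl fun γ _ => ?_).symm
        rw [TensorProduct.sum_tmul]
        exact Finset.sum_congr rfl fun u _ => TensorProduct.tmul_sum _ _ _

lemma theta_smul (hΔ : IsCoideal Δ) {D : MIdx p → Module.End k A}
    {Θv : MIdx p → Module.End k (E ⊗[A] F)}
    {Ψ₁v : MIdx p → Module.End k E} {Ψ₂v : MIdx p → Module.End k F}
    (hform : ∀ α ∈ Δ, ∀ (x : E) (y : F),
      Θv α (x ⊗ₜ[A] y) = ∑ β ∈ Finset.Iic α, Ψ₁v β x ⊗ₜ[A] Ψ₂v (α - β) y)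
    (hs₁ : ∀ β ∈ Δ, ∀ (a : A) (x : E),
      Ψ₁v β (a • x) = ∑ γ ∈ Finset.Iic β, D γ a • Ψ₁v (β - γ) x)
    {α : MIdx p} (hα : α ∈ Δ) (a : A) (t : E ⊗[A] F) :
    Θv α (a • t) = ∑ γ ∈ Finset.Iic α, D γ a • Θv (α - γ) t := by
  induction t using TensorProduct.induction_on with
  | zero => simp
  | add u v hu hv => simp [smul_add, map_add, hu, hv, Finset.sum_add_distrib]
  | tmul x y =>
    calc Θv α (a • (x ⊗ₜ[A] y))
        = Θv α ((a • x) ⊗ₜ[A] y) := by rw [TensorProduct.smul_tmul']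
      _ = ∑ β ∈ Finset.Iic α, Ψ₁v β (a • x) ⊗ₜ[A] Ψ₂v (α - β) y := hform α hα _ _
      _ = ∑ β ∈ Finset.Iic α, ∑ γ ∈ Finset.Iic β,
            D γ a • (Ψ₁v (β - γ) x ⊗ₜ[A] Ψ₂v (α - β) y) := by
          refine Finset.sum_congr rfl fun β hβ => ?_
          rw [hs₁ β (mem_coideal_of_le hΔ hα (Finset.mem_Iic.mp hβ)) a x,
            TensorProduct.sum_tmul]
          exact Finset.sum_congr rfl fun γ _ => TensorProduct.smul_tmul' _ _ _
      _ = ∑ γ ∈ Finset.Iic α, ∑ u ∈ Finset.Iic (α - γ),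
            D γ a • (Ψ₁v u x ⊗ₜ[A] Ψ₂v (α - γ - u) y) :=
          Iic_triple α (fun c b r => D c a • (Ψ₁v b x ⊗ₜ[A] Ψ₂v r y))
      _ = ∑ γ ∈ Finset.Iic α, D γ a • Θv (α - γ) (x ⊗ₜ[A] y) := by
          refine Finset.sum_congr rfl fun γ _ => ?_
          rw [hform (α - γ) (mem_coideal_of_le hΔ hα tsub_le_self) x y, Finset.smul_sum]

end Tensor


section Engine

variable {k A E F : Type*} [CommRing k] [CommRing A] [Algebra k A]
    [AddCommGroup E] [Module k E] [Module A E] [IsScalarTower k A E]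
    [AddCommGroup F] [Module k F] [Module A F] [IsScalarTower k A F]

/-- the canonical tensor-product automorphism series, defined on pure tensors by
`Θ_α(x ⊗ y) = ∑_{β ≤ α} Ψ₁_β(x) ⊗ Ψ₂_{α-β}(y)` -/
noncomputable def cTheta {p : ℕ} (Δ : Set (MIdx p))
    (Ψ₁v : MIdx p → Module.End k E) (Ψ₂v : MIdx p → Module.End k F)
    (hbal : ∀ α ∈ Δ, ∀ (a : A) (x : E) (y : F),
      ∑ β ∈ Finset.Iic α, Ψ₁v β (a • x) ⊗ₜ[A] Ψ₂v (α - β) y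
        = ∑ β ∈ Finset.Iic α, Ψ₁v β x ⊗ₜ[A] Ψ₂v (α - β) (a • y)) :
    MIdx p → Module.End k (E ⊗[A] F) := fun α =>
  if h : α ∈ Δ then
    { toFun := TensorProduct.liftAddHom
        (AddMonoidHom.mk'
          (fun x => AddMonoidHom.mk'
            (fun y => ∑ β ∈ Finset.Iic α, Ψ₁v β x ⊗ₜ[A] Ψ₂v (α - β) y)
            (fun y z => by
              simp [map_add, TensorProduct.tmul_add, Finset.sum_add_distrib]))
          (fun x x' => AddMonoidHom.ext fun y => by
            simp [map_add, TensorProduct.add_tmul, Finset.sum_add_distrib]))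
        (fun a x y => by simp only [AddMonoidHom.mk'_apply]; exact hbal α h a x y)
      map_add' := fun s t => map_add _ s t
      map_smul' := fun c t => by
        simp only [RingHom.id_apply]
        induction t using TensorProduct.induction_on with
        | zero => simp
        | tmul x y =>
          rw [TensorProduct.smul_tmul' c x y, TensorProduct.liftAddHom_tmul,
            TensorProduct.liftAddHom_tmul]
          simp only [AddMonoidHom.mk'_apply]
          rw [Finset.smul_sum]
          refine Finset.sum_congr rfl fun β _ => ?_
          rw [map_smul]
          exact (TensorProduct.smul_tmul' c _ _).symm
        | add u v hu hv => simp only [smul_add, map_add, hu, hv] }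
  else 0

lemma cTheta_tmul {p : ℕ} {Δ : Set (MIdx p)}
    {Ψ₁v : MIdx p → Module.End k E} {Ψ₂v : MIdx p → Module.End k F}
    {hbal : ∀ α ∈ Δ, ∀ (a : A) (x : E) (y : F),
      ∑ β ∈ Finset.Iic α, Ψ₁v β (a • x) ⊗ₜ[A] Ψ₂v (α - β) y
        = ∑ β ∈ Finset.Iic α, Ψ₁v β x ⊗ₜ[A] Ψ₂v (α - β) (a • y)}
    {α : MIdx p} (hα : α ∈ Δ) (x : E) (y : F) :
    cTheta Δ Ψ₁v Ψ₂v hbal α (x ⊗ₜ[A] y)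
      = ∑ β ∈ Finset.Iic α, Ψ₁v β x ⊗ₜ[A] Ψ₂v (α - β) y := by
  simp only [cTheta, dif_pos hα, LinearMap.coe_mk, AddHom.coe_mk,
    TensorProduct.liftAddHom_tmul, AddMonoidHom.mk'_apply]

variable (Ψ₁ : HSSystem k A E) (Ψ₂ : HSSystem k A F)
    (hΨ₁ : IsPreHSMod k A E Ψ₁) (hΨ₂ : IsPreHSMod k A F Ψ₂)
    (Θsys : HSSystem k A (E ⊗[A] F))
    (hmu : ∀ (p : ℕ) (Δ : Set (MIdx p)), IsCoideal Δ →
      ∀ D : MIdx p → Module.End k A, IsHS k A Δ D →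
        ∀ (eS : MIdx p → E) (fS : MIdx p → F), ∀ α ∈ Δ,
          fapply (Θsys p Δ D) (muconv eS fS) α
            = muconv (fapply (Ψ₁ p Δ D) eS) (fapply (Ψ₂ p Δ D) fS) α)
    {p : ℕ} {Δ : Set (MIdx p)} (hΔ : IsCoideal Δ)
    {D : MIdx p → Module.End k A} (hD : IsHS k A Δ D)

section

include hmu hΔ hD

lemma theta_form : ∀ α ∈ Δ, ∀ (x : E) (y : F),
    Θsys p Δ D α (x ⊗ₜ[A] y)
      = ∑ β ∈ Finset.Iic α, Ψ₁ p Δ D β x ⊗ₜ[A] Ψ₂ p Δ D (α - β) y :=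
  fun _ hα x y => formula_of_mu (hmu p Δ hΔ D hD) hα x y

include hΨ₁ hΨ₂ in
lemma theta_zero : Θsys p Δ D 0 = 1 := by
  refine end_ext fun x y => ?_
  rw [theta_form Ψ₁ Ψ₂ Θsys hmu hΔ hD 0 (zero_mem_coideal hΔ) x y, Iic_zero,
    Finset.sum_singleton]
  have e1 := (hΨ₁ p Δ hΔ D hD).1
  have e2 := (hΨ₂ p Δ hΔ D hD).1
  simp [e1, e2]

include hΨ₁ hΨ₂ in
lemma theta_congr {D' : MIdx p → Module.End k A} (hD' : IsHS k A Δ D')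
    (hagree : ∀ α ∈ Δ, D α = D' α) :
    ∀ α ∈ Δ, Θsys p Δ D α = Θsys p Δ D' α := by
  intro α hα
  refine end_ext fun x y => ?_
  rw [theta_form Ψ₁ Ψ₂ Θsys hmu hΔ hD α hα x y,
    theta_form Ψ₁ Ψ₂ Θsys hmu hΔ hD' α hα x y]
  refine Finset.sum_congr rfl fun β hβ => ?_
  rw [Finset.mem_Iic] at hβ
  rw [(hΨ₁ p Δ hΔ D hD).2.1 D' hD' hagree β (mem_coideal_of_le hΔ hα hβ),
    (hΨ₂ p Δ hΔ D hD).2.1 D' hD' hagree (α - β) (mem_coideal_of_le hΔ hα tsub_le_self)]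

include hΨ₁ hΨ₂ in
lemma theta_mul {E' : MIdx p → Module.End k A} (hE' : IsHS k A Δ E') :
    ∀ α ∈ Δ, Θsys p Δ (sconv D E') α = sconv (Θsys p Δ D) (Θsys p Δ E') α := by
  intro α hα
  have hDE : IsHS k A Δ (sconv D E') := sconv_isHS hΔ hD hE'
  refine end_ext fun x y => ?_
  have hL : Θsys p Δ (sconv D E') α (x ⊗ₜ[A] y)
      = ∑ γ ∈ Finset.Iic α, ∑ u ∈ Finset.Iic γ, ∑ v ∈ Finset.Iic (α - γ),
          Ψ₁ p Δ D u (Ψ₁ p Δ E' (γ - u) x) ⊗ₜ[A] Ψ₂ p Δ D v (Ψ₂ p Δ E' (α - γ - v) y) := by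
    rw [theta_form Ψ₁ Ψ₂ Θsys hmu hΔ hDE α hα x y]
    refine Finset.sum_congr rfl fun β hβ => ?_
    rw [Finset.mem_Iic] at hβ
    rw [(hΨ₁ p Δ hΔ D hD).2.2.1 E' hE' β (mem_coideal_of_le hΔ hα hβ),
      (hΨ₂ p Δ hΔ D hD).2.2.1 E' hE' (α - β) (mem_coideal_of_le hΔ hα tsub_le_self)]
    simp only [sconv, LinearMap.sum_apply, Module.End.mul_apply, TensorProduct.sum_tmul,
      TensorProduct.tmul_sum]
    exact Finset.sum_comm
  have hR : sconv (Θsys p Δ D) (Θsys p Δ E') α (x ⊗ₜ[A] y)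
      = ∑ β ∈ Finset.Iic α, ∑ u ∈ Finset.Iic (α - β), ∑ v ∈ Finset.Iic β,
          Ψ₁ p Δ D v (Ψ₁ p Δ E' u x) ⊗ₜ[A] Ψ₂ p Δ D (β - v) (Ψ₂ p Δ E' (α - β - u) y) := by
    simp only [sconv, LinearMap.sum_apply, Module.End.mul_apply]
    refine Finset.sum_congr rfl fun β hβ => ?_
    rw [Finset.mem_Iic] at hβ
    rw [theta_form Ψ₁ Ψ₂ Θsys hmu hΔ hE' (α - β) (mem_coideal_of_le hΔ hα tsub_le_self) x y,
      map_sum]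
    refine Finset.sum_congr rfl fun u _ => ?_
    rw [theta_form Ψ₁ Ψ₂ Θsys hmu hΔ hD β (mem_coideal_of_le hΔ hα hβ)]
  rw [hL, hR,
    Iic_quad α (fun a b c d => Ψ₁ p Δ D a (Ψ₁ p Δ E' b x) ⊗ₜ[A] Ψ₂ p Δ D c (Ψ₂ p Δ E' d y))]

include hΨ₁ hΨ₂ in
lemma theta_leib :
    ∀ (a : MIdx p → A) (m : MIdx p → E ⊗[A] F), ∀ α ∈ Δ,
      fapply (Θsys p Δ D) (smul' a m) α
        = smul' (fapply D a) (fapply (Θsys p Δ D) m) α := by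
  intro a m α hα
  have hs₁ : ∀ β ∈ Δ, ∀ (c : A) (x : E),
      Ψ₁ p Δ D β (c • x) = ∑ γ ∈ Finset.Iic β, D γ c • Ψ₁ p Δ D (β - γ) x :=
    fun β hβ c x => psi_smul_of_leib (hΨ₁ p Δ hΔ D hD).2.2.2.2.1 hβ c x
  have hθs : ∀ β ∈ Δ, ∀ (c : A) (t : E ⊗[A] F),
      Θsys p Δ D β (c • t) = ∑ γ ∈ Finset.Iic β, D γ c • Θsys p Δ D (β - γ) t :=
    fun β hβ c t =>
      theta_smul hΔ (theta_form Ψ₁ Ψ₂ Θsys hmu hΔ hD) hs₁ hβ c t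
  calc fapply (Θsys p Δ D) (smul' a m) α
      = ∑ β ∈ Finset.Iic α, ∑ u ∈ Finset.Iic (α - β), ∑ v ∈ Finset.Iic β,
          D v (a u) • Θsys p Δ D (β - v) (m (α - β - u)) := by
        unfold fapply smul'
        refine Finset.sum_congr rfl fun β hβ => ?_
        rw [Finset.mem_Iic] at hβ
        rw [map_sum]
        refine Finset.sum_congr rfl fun u _ => ?_
        rw [hθs β (mem_coideal_of_le hΔ hα hβ)]
    _ = ∑ γ ∈ Finset.Iic α, ∑ u ∈ Finset.Iic γ, ∑ v ∈ Finset.Iic (α - γ),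
          D u (a (γ - u)) • Θsys p Δ D v (m (α - γ - v)) :=
        Iic_quad α (fun a' b c d => D a' (a b) • Θsys p Δ D c (m d))
    _ = smul' (fapply D a) (fapply (Θsys p Δ D) m) α := by
        unfold smul' fapply
        refine (Finset.sum_congr rfl fun γ _ => ?_).symm
        rw [Finset.sum_smul]
        exact Finset.sum_congr rfl fun u _ => Finset.smul_sum

include hΨ₁ hΨ₂ in
lemma theta_sub {q : ℕ} {nab : Set (MIdx q)} (hnab : IsCoideal nab)
    (φ : SubstMap A p q Δ nab)
    (hc₁ : ∀ u ∈ nab, ∀ x : E,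
      Ψ₁ q nab (φ.bulletEnd D) u x
        = ∑ β ∈ Finset.Iic (fun _ => wt u : MIdx p), φ.C β u • Ψ₁ p Δ D β x)
    (hc₂ : ∀ u ∈ nab, ∀ y : F,
      Ψ₂ q nab (φ.bulletEnd D) u y
        = ∑ γ ∈ Finset.Iic (fun _ => wt u : MIdx p), φ.C γ u • Ψ₂ p Δ D γ y) :
    ∀ e ∈ nab, ∀ t : E ⊗[A] F,
      Θsys q nab (φ.bulletEnd D) e t
        = ∑ α ∈ Finset.Iic (fun _ => wt e : MIdx p), φ.C α e • Θsys p Δ D α t := by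
  intro e he t
  have hbul : IsHS k A nab (φ.bulletEnd D) := bullet_isHS hΔ hnab φ hD
  induction t using TensorProduct.induction_on with
  | zero => simp
  | add u v hu hv => simp [map_add, smul_add, Finset.sum_add_distrib, hu, hv]
  | tmul x y =>
    calc Θsys q nab (φ.bulletEnd D) e (x ⊗ₜ[A] y)
        = ∑ u ∈ Finset.Iic e,
            Ψ₁ q nab (φ.bulletEnd D) u x ⊗ₜ[A] Ψ₂ q nab (φ.bulletEnd D) (e - u) y :=
          formula_of_mu (hmu q nab hnab _ hbul) he x y
      _ = ∑ u ∈ Finset.Iic e,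
            (TensorProduct.mk A E F)
              (∑ β ∈ Finset.Iic (fun _ => wt u : MIdx p), φ.C β u • Ψ₁ p Δ D β x)
              (∑ γ ∈ Finset.Iic (fun _ => wt (e - u) : MIdx p),
                φ.C γ (e - u) • Ψ₂ p Δ D γ y) := by
          refine Finset.sum_congr rfl fun u hu => ?_
          rw [Finset.mem_Iic] at hu
          rw [hc₁ u (mem_coideal_of_le hnab he hu) x,
            hc₂ (e - u) (mem_coideal_of_le hnab he tsub_le_self) y]
          rfl
      _ = ∑ α ∈ Finset.Iic (fun _ => wt e : MIdx p), ∑ β ∈ Finset.Iic α,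
            φ.C α e • (TensorProduct.mk A E F) (Ψ₁ p Δ D β x) (Ψ₂ p Δ D (α - β) y) :=
          substKey hΔ hnab φ he (TensorProduct.mk A E F)
            (fun β => Ψ₁ p Δ D β x) (fun γ => Ψ₂ p Δ D γ y)
      _ = ∑ α ∈ Finset.Iic (fun _ => wt e : MIdx p), φ.C α e • Θsys p Δ D α (x ⊗ₜ[A] y) := by
          refine Finset.sum_congr rfl fun α _ => ?_
          by_cases hαΔ : α ∈ Δ
          · rw [theta_form Ψ₁ Ψ₂ Θsys hmu hΔ hD α hαΔ x y, Finset.smul_sum]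
            rfl
          · simp [φ.c_suppL α hαΔ]

end

end Engine

/-- Let `(E,Ψ₁)` and `(F,Ψ₂)` be left pre-HS-modules over `A/k`.
(1) For every `p`, every non-empty co-ideal `Δ ⊆ ℕ^p` and every `D ∈ HS^p_k(A;Δ)`,
there is a unique `k[[s]]_Δ`-linear automorphism `Θ` of `(E⊗_A F)[[s]]_Δ`, congruent
to the identity,  with `Θ ∘ μ = μ ∘ (Ψ₁^p_Δ(D) ⊗ Ψ₂^p_Δ(D))`.  (2) The resulting
system is a left pre-HS-module structure on `E ⊗_A F`, and a HS-module structure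
whenever `Ψ₁` and `Ψ₂` are. -/
theorem stmt14 (k A E F : Type*) [CommRing k] [CommRing A] [Algebra k A]
    [AddCommGroup E] [Module k E] [Module A E] [IsScalarTower k A E]
    [AddCommGroup F] [Module k F] [Module A F] [IsScalarTower k A F]
    (Ψ₁ : HSSystem k A E) (Ψ₂ : HSSystem k A F)
    (hΨ₁ : IsPreHSMod k A E Ψ₁) (hΨ₂ : IsPreHSMod k A F Ψ₂) :
    -- (1)
    (∀ (p : ℕ) (Δ : Set (MIdx p)), IsCoideal Δ →
      ∀ D : MIdx p → Module.End k A, IsHS k A Δ D →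
        ∃ Θ : MIdx p → Module.End k (E ⊗[A] F),
          Θ 0 = 1
          ∧ (∀ (eS : MIdx p → E) (fS : MIdx p → F), ∀ α ∈ Δ,
              fapply Θ (muconv eS fS) α
                = muconv (fapply (Ψ₁ p Δ D) eS) (fapply (Ψ₂ p Δ D) fS) α)
          ∧ (∃ Θ' : MIdx p → Module.End k (E ⊗[A] F),
              (∀ α ∈ Δ, sconv Θ Θ' α = (one' : MIdx p → Module.End k (E ⊗[A] F)) α)
              ∧ (∀ α ∈ Δ, sconv Θ' Θ α = (one' : MIdx p → Module.End k (E ⊗[A] F)) α))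
          ∧ (∀ Θ'' : MIdx p → Module.End k (E ⊗[A] F),
              (∀ (eS : MIdx p → E) (fS : MIdx p → F), ∀ α ∈ Δ,
                fapply Θ'' (muconv eS fS) α
                  = muconv (fapply (Ψ₁ p Δ D) eS) (fapply (Ψ₂ p Δ D) fS) α) →
              ∀ α ∈ Δ, Θ'' α = Θ α))
    -- (2) pre-HS-module structure
    ∧ (∀ Θsys : HSSystem k A (E ⊗[A] F),
        (∀ (p : ℕ) (Δ : Set (MIdx p)), IsCoideal Δ →
          ∀ D : MIdx p → Module.End k A, IsHS k A Δ D →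
            ∀ (eS : MIdx p → E) (fS : MIdx p → F), ∀ α ∈ Δ,
              fapply (Θsys p Δ D) (muconv eS fS) α
                = muconv (fapply (Ψ₁ p Δ D) eS) (fapply (Ψ₂ p Δ D) fS) α) →
        IsPreHSMod k A (E ⊗[A] F) Θsys)
    -- (2') HS-module structure when `Ψ₁` and `Ψ₂` are HS-module structures
    ∧ (IsHSMod k A E Ψ₁ → IsHSMod k A F Ψ₂ →
        ∀ Θsys : HSSystem k A (E ⊗[A] F),
        (∀ (p : ℕ) (Δ : Set (MIdx p)), IsCoideal Δ →
          ∀ D : MIdx p → Module.End k A, IsHS k A Δ D →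
            ∀ (eS : MIdx p → E) (fS : MIdx p → F), ∀ α ∈ Δ,
              fapply (Θsys p Δ D) (muconv eS fS) α
                = muconv (fapply (Ψ₁ p Δ D) eS) (fapply (Ψ₂ p Δ D) fS) α) →
        IsHSMod k A (E ⊗[A] F) Θsys) := by
  refine ⟨?_, ?_, ?_⟩
  · -- part (1): existence and uniqueness of the canonical automorphism
    intro p Δ hΔ D hD
    have hs₁ : ∀ β ∈ Δ, ∀ (c : A) (x : E),
        Ψ₁ p Δ D β (c • x) = ∑ γ ∈ Finset.Iic β, D γ c • Ψ₁ p Δ D (β - γ) x :=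
      fun β hβ c x => psi_smul_of_leib (hΨ₁ p Δ hΔ D hD).2.2.2.2.1 hβ c x
    have hs₂ : ∀ β ∈ Δ, ∀ (c : A) (y : F),
        Ψ₂ p Δ D β (c • y) = ∑ γ ∈ Finset.Iic β, D γ c • Ψ₂ p Δ D (β - γ) y :=
      fun β hβ c y => psi_smul_of_leib (hΨ₂ p Δ hΔ D hD).2.2.2.2.1 hβ c y
    have hbal : ∀ α ∈ Δ, ∀ (a : A) (x : E) (y : F),
        ∑ β ∈ Finset.Iic α, Ψ₁ p Δ D β (a • x) ⊗ₜ[A] Ψ₂ p Δ D (α - β) y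
          = ∑ β ∈ Finset.Iic α, Ψ₁ p Δ D β x ⊗ₜ[A] Ψ₂ p Δ D (α - β) (a • y) := by
      intro α hα a x y
      calc ∑ β ∈ Finset.Iic α, Ψ₁ p Δ D β (a • x) ⊗ₜ[A] Ψ₂ p Δ D (α - β) y
          = ∑ β ∈ Finset.Iic α, ∑ γ ∈ Finset.Iic β,
              Ψ₁ p Δ D (β - γ) x ⊗ₜ[A] (D γ a • Ψ₂ p Δ D (α - β) y) := by
            refine Finset.sum_congr rfl fun β hβ => ?_
            rw [Finset.mem_Iic] at hβ
            rw [hs₁ β (mem_coideal_of_le hΔ hα hβ) a x, TensorProduct.sum_tmul]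
            exact Finset.sum_congr rfl fun γ _ => TensorProduct.smul_tmul _ _ _
        _ = ∑ γ ∈ Finset.Iic α, ∑ u ∈ Finset.Iic (α - γ),
              Ψ₁ p Δ D u x ⊗ₜ[A] (D γ a • Ψ₂ p Δ D (α - γ - u) y) :=
            Iic_triple α (fun c b r => Ψ₁ p Δ D b x ⊗ₜ[A] (D c a • Ψ₂ p Δ D r y))
        _ = ∑ u ∈ Finset.Iic α, ∑ γ ∈ Finset.Iic (α - u),
              Ψ₁ p Δ D u x ⊗ₜ[A] (D γ a • Ψ₂ p Δ D (α - γ - u) y) :=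
            Iic_swap α (fun c u' => Ψ₁ p Δ D u' x ⊗ₜ[A] (D c a • Ψ₂ p Δ D (α - c - u') y))
        _ = ∑ β ∈ Finset.Iic α, Ψ₁ p Δ D β x ⊗ₜ[A] Ψ₂ p Δ D (α - β) (a • y) := by
            refine Finset.sum_congr rfl fun β hβ => ?_
            rw [Finset.mem_Iic] at hβ
            rw [hs₂ (α - β) (mem_coideal_of_le hΔ hα tsub_le_self) a y,
              TensorProduct.tmul_sum]
            refine Finset.sum_congr rfl fun γ _ => ?_
            rw [tsub_right_comm]
    set Θ := cTheta Δ (Ψ₁ p Δ D) (Ψ₂ p Δ D) hbal with hΘdef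
    have hform : ∀ α ∈ Δ, ∀ (x : E) (y : F),
        Θ α (x ⊗ₜ[A] y) = ∑ β ∈ Finset.Iic α, Ψ₁ p Δ D β x ⊗ₜ[A] Ψ₂ p Δ D (α - β) y :=
      fun α hα x y => cTheta_tmul hα x y
    have hzero : Θ 0 = 1 := by
      refine end_ext fun x y => ?_
      rw [hform 0 (zero_mem_coideal hΔ) x y, Iic_zero, Finset.sum_singleton]
      simp [(hΨ₁ p Δ hΔ D hD).1, (hΨ₂ p Δ hΔ D hD).1]
    refine ⟨Θ, hzero, mu_of_formula hΔ hform,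
      ⟨sinv Θ, fun α _ => congrFun (sconv_sinv Θ hzero) α,
        fun α _ => congrFun (sinv_sconv Θ hzero) α⟩, ?_⟩
    intro Θ'' hμ'' α hα
    refine end_ext fun x y => ?_
    rw [formula_of_mu hμ'' hα x y, hform α hα x y]
  · -- part (2): pre-HS-module structure
    intro Θsys hmu p Δ hΔ D hD
    refine ⟨theta_zero Ψ₁ Ψ₂ hΨ₁ hΨ₂ Θsys hmu hΔ hD,
      fun D' hD' hag => theta_congr Ψ₁ Ψ₂ hΨ₁ hΨ₂ Θsys hmu hΔ hD hD' hag,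
      fun E' hE' => theta_mul Ψ₁ Ψ₂ hΨ₁ hΨ₂ Θsys hmu hΔ hD hE',
      ⟨sinv (Θsys p Δ D),
        fun α _ => congrFun (sconv_sinv _ (theta_zero Ψ₁ Ψ₂ hΨ₁ hΨ₂ Θsys hmu hΔ hD)) α,
        fun α _ => congrFun (sinv_sconv _ (theta_zero Ψ₁ Ψ₂ hΨ₁ hΨ₂ Θsys hmu hΔ hD)) α⟩,
      theta_leib Ψ₁ Ψ₂ hΨ₁ hΨ₂ Θsys hmu hΔ hD, ?_⟩
    intro q nab hnab φ hconst e he x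
    exact theta_sub Ψ₁ Ψ₂ hΨ₁ hΨ₂ Θsys hmu hΔ hD hnab φ
      (fun u hu x' => (hΨ₁ p Δ hΔ D hD).2.2.2.2.2 q nab hnab φ hconst u hu x')
      (fun u hu y' => (hΨ₂ p Δ hΔ D hD).2.2.2.2.2 q nab hnab φ hconst u hu y')
      e he x
  · -- part (2'): HS-module structure
    intro h₁ h₂ Θsys hmu p Δ hΔ D hD
    refine ⟨theta_zero Ψ₁ Ψ₂ hΨ₁ hΨ₂ Θsys hmu hΔ hD,
      fun D' hD' hag => theta_congr Ψ₁ Ψ₂ hΨ₁ hΨ₂ Θsys hmu hΔ hD hD' hag,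
      fun E' hE' => theta_mul Ψ₁ Ψ₂ hΨ₁ hΨ₂ Θsys hmu hΔ hD hE',
      ⟨sinv (Θsys p Δ D),
        fun α _ => congrFun (sconv_sinv _ (theta_zero Ψ₁ Ψ₂ hΨ₁ hΨ₂ Θsys hmu hΔ hD)) α,
        fun α _ => congrFun (sinv_sconv _ (theta_zero Ψ₁ Ψ₂ hΨ₁ hΨ₂ Θsys hmu hΔ hD)) α⟩,
      theta_leib Ψ₁ Ψ₂ hΨ₁ hΨ₂ Θsys hmu hΔ hD, ?_⟩
    intro q nab hnab φ e he x
    exact theta_sub Ψ₁ Ψ₂ hΨ₁ hΨ₂ Θsys hmu hΔ hD hnab φ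
      (fun u hu x' => (h₁ p Δ hΔ D hD).2.2.2.2.2 q nab hnab φ u hu x')
      (fun u hu y' => (h₂ p Δ hΔ D hD).2.2.2.2.2 q nab hnab φ u hu y')
      e he x

end HS
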